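/- A compact connected metrizable linearly ordered topological space with at least two points, equipped with the order topology, is order-homeomorphic to the unit interval [0,1]. -/

import Mathlib

open Set

/-- A connected linear order topology is densely ordered. -/
lemma denselyOrdered_of_connectedSpace (C : Type*) [LinearOrder C] [TopologicalSpace C]
    [OrderTopology C] [ConnectedSpace C] : DenselyOrdered C := by
  constructor
  intro x y hxy
  by_contra h
  push_neg at h
  have hIio : Iio y = Iic x := by
    ext z
    simp only [mem_Iio, mem_Iic]
    constructor
    · intro hz
      by_contra hz'
      exact absurd hz (not_lt.2 (h z (lt_of_not_ge hz')))
    · intro hz; exact lt_of_le_of_lt hz hxy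
  have hclopen : IsClopen (Iio y) := ⟨hIio ▸ isClosed_Iic, isOpen_Iio⟩
  rcases isClopen_iff.1 hclopen with he | hu
  · exact absurd (mem_Iio.2 hxy : x ∈ Iio y) (he ▸ notMem_empty x)
  · have : y ∈ Iio y := hu ▸ mem_univ y
    exact lt_irrefl y this

/-- A compact connected metrizable linearly ordered topological space with at least
two points is order-homeomorphic to the unit interval [0,1]. -/
theorem orderHomeo_unitInterval (C : Type*) [LinearOrder C] [TopologicalSpace C]
    [OrderTopology C] [CompactSpace C] [ConnectedSpace C]
    [TopologicalSpace.MetrizableSpace C] [Nontrivial C] :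
    ∃ e : C ≃o unitInterval, Continuous e ∧ Continuous e.symm := by
  haveI : DenselyOrdered C := denselyOrdered_of_connectedSpace C
  letI := TopologicalSpace.metrizableSpaceMetric C
  obtain ⟨a, haU, ha⟩ : ∃ a, a ∈ univ ∧ ∀ x ∈ univ, a ≤ x := by
    obtain ⟨a, h1, h2⟩ := (isCompact_univ : IsCompact (univ : Set C)).exists_isLeast univ_nonempty
    exact ⟨a, h1, h2⟩
  obtain ⟨b, hbU, hb⟩ : ∃ b, b ∈ univ ∧ ∀ x ∈ univ, x ≤ b := by
    obtain ⟨b, h1, h2⟩ := (isCompact_univ : IsCompact (univ : Set C)).exists_isGreatest univ_nonempty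
    exact ⟨b, h1, h2⟩
  have ha' : ∀ x : C, a ≤ x := fun x => ha x (mem_univ x)
  have hb' : ∀ x : C, x ≤ b := fun x => hb x (mem_univ x)
  have hab : a < b := by
    obtain ⟨x, y, hxy⟩ := exists_pair_ne C
    rcases lt_or_gt_of_ne hxy with h | h
    · exact lt_of_le_of_lt (ha' x) (lt_of_lt_of_le h (hb' y))
    · exact lt_of_le_of_lt (ha' y) (lt_of_lt_of_le h (hb' x))
  obtain ⟨D, hDc, hDd⟩ := TopologicalSpace.exists_countable_dense C
  -- order density of D
  have key : ∀ x y : C, x < y → ∃ d ∈ D, x < d ∧ d < y := by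
    intro x y hxy
    obtain ⟨z, hz1, hz2⟩ := exists_between hxy
    obtain ⟨d, hd1, hd2⟩ := hDd.exists_mem_open isOpen_Ioo ⟨z, hz1, hz2⟩
    exact ⟨d, hd1, hd2.1, hd2.2⟩
  set E : Set C := D ∩ Ioo a b with hE
  haveI : Countable E := ((hDc.mono inter_subset_left).to_subtype)
  haveI : Nonempty E := by
    obtain ⟨d, hd, h1, h2⟩ := key a b hab
    exact ⟨⟨d, hd, h1, h2⟩⟩
  have keyE : ∀ x y : C, a ≤ x → y ≤ b → x < y → ∃ d : E, x < (d : C) ∧ (d : C) < y := by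
    intro x y hax hyb hxy
    obtain ⟨d, hd, h1, h2⟩ := key x y hxy
    exact ⟨⟨d, hd, lt_of_le_of_lt hax h1, lt_of_lt_of_le h2 hyb⟩, h1, h2⟩
  haveI : DenselyOrdered E := by
    constructor
    rintro ⟨d1, hd1⟩ ⟨d2, hd2⟩ h
    obtain ⟨d, h1, h2⟩ := keyE d1 d2 hd1.2.1.le hd2.2.2.le h
    exact ⟨d, h1, h2⟩
  haveI : NoMinOrder E := by
    constructor
    rintro ⟨d1, hd1⟩
    obtain ⟨d, h1, h2⟩ := keyE a d1 le_rfl hd1.2.2.le hd1.2.1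
    exact ⟨d, h2⟩
  haveI : NoMaxOrder E := by
    constructor
    rintro ⟨d1, hd1⟩
    obtain ⟨d, h1, h2⟩ := keyE d1 b hd1.2.1.le le_rfl hd1.2.2
    exact ⟨d, h1⟩
  haveI : Nonempty (Ioo (0:ℚ) 1) := ⟨⟨1/2, by norm_num⟩⟩
  obtain ⟨φ⟩ := Order.iso_of_countable_dense E (Ioo (0:ℚ) 1)
  set ψ : E → ℝ := fun d => ((φ d : ℚ) : ℝ) with hψ
  have hψmono : StrictMono ψ := by
    intro d1 d2 h
    have : ((φ d1 : ℚ) : ℝ) < ((φ d2 : ℚ) : ℝ) := by exact_mod_cast (φ.strictMono h : φ d1 < φ d2)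
    simpa [hψ] using this
  have hψ01 : ∀ d : E, ψ d ∈ Ioo (0:ℝ) 1 := by
    intro d
    obtain ⟨h1, h2⟩ := (φ d).2
    constructor
    · show (0:ℝ) < ((φ d : ℚ) : ℝ); exact_mod_cast h1
    · show ((φ d : ℚ) : ℝ) < 1; exact_mod_cast h2
  set f : C → ℝ := fun x => sSup (insert (0:ℝ) (ψ '' {d : E | (d : C) < x})) with hf
  have hbdd : ∀ x : C, ∀ z ∈ insert (0:ℝ) (ψ '' {d : E | (d : C) < x}), z ≤ 1 := by
    rintro x z (rfl | ⟨d, _, rfl⟩)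
    · norm_num
    · exact (hψ01 d).2.le
  have hBdd : ∀ x : C, BddAbove (insert (0:ℝ) (ψ '' {d : E | (d : C) < x})) :=
    fun x => ⟨1, fun z hz => hbdd x z hz⟩
  have hne : ∀ x : C, (insert (0:ℝ) (ψ '' {d : E | (d : C) < x})).Nonempty :=
    fun x => ⟨0, mem_insert _ _⟩
  have hf0 : ∀ x, 0 ≤ f x := fun x => le_csSup (hBdd x) (mem_insert _ _)
  have hf1 : ∀ x, f x ≤ 1 := fun x => csSup_le (hne x) (hbdd x)
  have hfd : ∀ (d : E) (x : C), (d : C) < x → ψ d ≤ f x := by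
    intro d x h
    exact le_csSup (hBdd x) (mem_insert_of_mem _ ⟨d, h, rfl⟩)
  have hfa : f a ≤ 0 := by
    apply csSup_le (hne a)
    rintro z (rfl | ⟨d, hd, rfl⟩)
    · exact le_rfl
    · exact absurd hd (not_lt.2 (ha' d))
  have hfmono : StrictMono f := by
    intro x y hxy
    obtain ⟨d1, h1, h2⟩ := keyE x y (ha' x) (hb' y) hxy
    obtain ⟨d2, h3, h4⟩ := keyE (d1 : C) y (ha' _) (hb' y) h2
    have hle : f x ≤ ψ d1 := by
      apply csSup_le (hne x)
      rintro z (rfl | ⟨d, hd, rfl⟩)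
      · exact (hψ01 d1).1.le
      · exact (hψmono.monotone (le_of_lt (Subtype.coe_lt_coe.1 (lt_trans hd h1) : d < d1)))
    have h12 : ψ d1 < ψ d2 := hψmono (Subtype.coe_lt_coe.1 h3)
    exact lt_of_le_of_lt hle (lt_of_lt_of_le h12 (hfd d2 y h4))
  -- density of the range of ψ
  have hdense : ∀ s t : ℝ, 0 ≤ s → t ≤ 1 → s < t → ∃ d : E, s < ψ d ∧ ψ d < t := by
    intro s t hs ht hst
    obtain ⟨q, hq1, hq2⟩ := exists_rat_btwn (show (2*s+t)/3 < (s+2*t)/3 by linarith)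
    have hsq : s < (q : ℝ) := lt_of_le_of_lt (by linarith) hq1
    have hqt : (q : ℝ) < t := lt_of_lt_of_le hq2 (by linarith)
    have hq0 : (0:ℚ) < q := by exact_mod_cast lt_of_le_of_lt hs hsq
    have hq1' : q < (1:ℚ) := by exact_mod_cast lt_of_lt_of_le hqt ht
    refine ⟨φ.symm ⟨q, hq0, hq1'⟩, ?_, ?_⟩
    · simpa [hψ, φ.apply_symm_apply] using hsq
    · simpa [hψ, φ.apply_symm_apply] using hqt
  -- surjectivity
  have hsurj : ∀ t : ℝ, 0 ≤ t → t ≤ 1 → ∃ x : C, f x = t := by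
    intro t ht0 ht1
    set A : Set C := {c | f c ≤ t} with hA
    have hAne : (closure A).Nonempty := ⟨a, subset_closure (le_trans hfa ht0)⟩
    obtain ⟨x, hx, hxg⟩ := (isClosed_closure (s := A)).isCompact.exists_isGreatest hAne
    refine ⟨x, le_antisymm ?_ ?_⟩
    · by_contra h
      push_neg at h
      obtain ⟨z, hz, htz⟩ := exists_lt_of_lt_csSup (hne x) h
      rcases hz with rfl | ⟨d, hd, rfl⟩
      · exact absurd htz (not_lt.2 ht0)
      · have hsub : A ⊆ Iic (d : C) := by
          intro c hc
          by_contra hc'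
          exact absurd (le_trans (hfd d c (lt_of_not_ge hc')) hc) (not_le.2 htz)
        have : x ≤ (d : C) := (closure_minimal hsub isClosed_Iic) hx
        exact absurd hd (not_lt.2 this)
    · by_contra h
      push_neg at h
      obtain ⟨d0, h01, h02⟩ := hdense (f x) t (hf0 x) ht1 h
      obtain ⟨d1, h11, h12⟩ := hdense (ψ d0) t (hψ01 d0).1.le ht1 h02
      have hd01 : d0 < d1 := hψmono.lt_iff_lt.1 h11
      have hfd1 : f (d1 : C) ≤ t := by
        apply csSup_le (hne _)
        rintro z (rfl | ⟨d, hd, rfl⟩)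
        · exact le_trans (hf0 x) h.le
        · exact le_of_lt (lt_trans (hψmono (Subtype.coe_lt_coe.1 hd)) h12)
      have : (d1 : C) ≤ x := hxg (subset_closure (show (d1:C) ∈ A from hfd1))
      rcases lt_or_eq_of_le this with hlt | heq
      · exact absurd (hfd d0 x (lt_trans (Subtype.coe_lt_coe.2 hd01) hlt)) (not_le.2 h01)
      · rw [← heq] at h01
        exact absurd (hfd d0 (d1:C) (Subtype.coe_lt_coe.2 hd01)) (not_le.2 h01)
  -- assemble
  set F : C → unitInterval := fun x => ⟨f x, hf0 x, hf1 x⟩ with hF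
  have hFmono : StrictMono F := fun x y h => by
    exact (Subtype.mk_lt_mk.2 (hfmono h) : (⟨f x, hf0 x, hf1 x⟩ : unitInterval) < ⟨f y, hf0 y, hf1 y⟩)
  have hFsurj : Function.Surjective F := by
    rintro ⟨t, ht0, ht1⟩
    obtain ⟨x, hx⟩ := hsurj t ht0 ht1
    exact ⟨x, Subtype.ext hx⟩
  let e := StrictMono.orderIsoOfSurjective F hFmono hFsurj
  exact ⟨e, e.continuous, e.symm.continuous⟩
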